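/- For any α ∈ (0,1), the total variation distance between the Gaussian mixture ∑_{k=1}^K π_k N(μ_k, I_d) and its diffused version ∑_{k=1}^K π_k N(√α μ_k, I_d) satisfies TV( ∑_k π_k N(μ_k, I_d), ∑_k π_k N(√α μ_k, I_d) ) ≤ (1/√2) (1 − α) ∑_{k=1}^K π_k ‖μ_k‖₂. -/

import Mathlib

open MeasureTheory Real Finset
open scoped RealInnerProductSpace BigOperators

noncomputable section

/-- Density of the Gaussian distribution `N(m, v I_d)` on `ℝ^d`. -/
def gaussV (d : ℕ) (v : ℝ) (m x : EuclideanSpace ℝ (Fin d)) : ℝ :=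
  (2 * Real.pi * v) ^ (-(d : ℝ) / 2) * Real.exp (-‖x - m‖ ^ 2 / (2 * v))

/-- Density of the Gaussian mixture `∑_k w_k N(√abar μ_k, I_d)`. -/
def mixDensity (d K : ℕ) (w : Fin K → ℝ) (μ : Fin K → EuclideanSpace ℝ (Fin d))
    (abar : ℝ) (x : EuclideanSpace ℝ (Fin d)) : ℝ :=
  ∑ k, w k * gaussV d 1 (Real.sqrt abar • μ k) x

/-- Posterior component weights `π_k^{(t)}(x)`. -/
def postWeight (d K : ℕ) (w : Fin K → ℝ) (μ : Fin K → EuclideanSpace ℝ (Fin d))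
    (abar : ℝ) (k : Fin K) (x : EuclideanSpace ℝ (Fin d)) : ℝ :=
  w k * Real.exp (-‖x - Real.sqrt abar • μ k‖ ^ 2 / 2) /
    ∑ i, w i * Real.exp (-‖x - Real.sqrt abar • μ i‖ ^ 2 / 2)

/-- Closed form of the score `∇ log p_{X_t^GMM}` of the diffused GMM. -/
def gmmScore (d K : ℕ) (w : Fin K → ℝ) (μ : Fin K → EuclideanSpace ℝ (Fin d))
    (abar : ℝ) (x : EuclideanSpace ℝ (Fin d)) : EuclideanSpace ℝ (Fin d) :=
  -x + Real.sqrt abar • ∑ k, postWeight d K w μ abar k x • μ k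

/-- The Jacobian matrix `J_t(x)` of the diffused GMM score. -/
def gmmJac (d K : ℕ) (w : Fin K → ℝ) (μ : Fin K → EuclideanSpace ℝ (Fin d))
    (abar : ℝ) (x : EuclideanSpace ℝ (Fin d)) : Matrix (Fin d) (Fin d) ℝ :=
  Matrix.of fun i j =>
    (if i = j then (-1 : ℝ) else 0) +
      abar * ((∑ k, postWeight d K w μ abar k x * (μ k i * μ k j)) -
        (∑ k, postWeight d K w μ abar k x * μ k i) *
          (∑ k, postWeight d K w μ abar k x * μ k j))

/-- The quantity `ζ_k^{(t)}(x)`, where `abar` plays the role of `ᾱ_t` and `a` that of `α_t`. -/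
def zeta (d K : ℕ) (w : Fin K → ℝ) (μ : Fin K → EuclideanSpace ℝ (Fin d))
    (abar a : ℝ) (k : Fin K) (x : EuclideanSpace ℝ (Fin d)) : ℝ :=
  (1 - a ^ 2) / (2 * a ^ 2) *
      (‖x - Real.sqrt abar • μ k‖ ^ 2 -
        ∑ i, postWeight d K w μ abar i x * ‖x - Real.sqrt abar • μ i‖ ^ 2) +
    (1 - a) / a ^ 2 *
      ⟪gmmScore d K w μ abar x,
        ∑ i, postWeight d K w μ abar i x • (Real.sqrt abar • (μ i - μ k))⟫

/-- The typical set `E_t`. -/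
def Eset (d K T : ℕ) (w : Fin K → ℝ) (μ : Fin K → EuclideanSpace ℝ (Fin d))
    (abar a C₁ C₂ : ℝ) : Set (EuclideanSpace ℝ (Fin d)) :=
  {x | Matrix.trace (1 + gmmJac d K w μ abar x) ≤ C₁ * Real.log ((K : ℝ) * T) ∧
    ∑ k, postWeight d K w μ abar k x * Real.exp (-(zeta d K w μ abar a k x)) ≤
      Real.exp (C₂ * (1 - a) ^ 2 * Real.log ((K : ℝ) * T) ^ 2)}

/-- The set `A_t`. -/
def Aset (d K T : ℕ) (w : Fin K → ℝ) (μ : Fin K → EuclideanSpace ℝ (Fin d))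
    (abar cR C₇ : ℝ) : Set (EuclideanSpace ℝ (Fin d)) :=
  {x | -(C₇ * d * Real.log ((d : ℝ) * T)) ≤ Real.log (mixDensity d K w μ abar x) ∧
    ‖x‖ ≤ Real.sqrt (2 * (T : ℝ) ^ (2 * cR) + 16 * d * Real.log T)}

/-- The set `T_k`. -/
def Tset (d K T : ℕ) (μ : Fin K → EuclideanSpace ℝ (Fin d))
    (abar C₅ : ℝ) (k : Fin K) : Set (EuclideanSpace ℝ (Fin d)) :=
  {x | ∀ i : Fin K,
    |⟪x - Real.sqrt abar • μ k, Real.sqrt abar • (μ i - μ k)⟫| ≤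
      C₅ * Real.sqrt (abar * Real.log ((K : ℝ) * T)) * ‖μ i - μ k‖}

/-- Forward (diffused) marginal density at noise level `abar`, starting from density `f₀`. -/
def fwdDensity (d : ℕ) (f₀ : EuclideanSpace ℝ (Fin d) → ℝ) (abar : ℝ)
    (x : EuclideanSpace ℝ (Fin d)) : ℝ :=
  ∫ y, gaussV d (1 - abar) (Real.sqrt abar • y) x * f₀ y

/-- Stein score of a density `p`. -/
def scoreOf (d : ℕ) (p : EuclideanSpace ℝ (Fin d) → ℝ)
    (x : EuclideanSpace ℝ (Fin d)) : EuclideanSpace ℝ (Fin d) :=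
  gradient (fun y => Real.log (p y)) x

/-- Truncation (clipping) of a score estimate at radius `R`. -/
def clipFn (d : ℕ) (R : ℝ) (s : EuclideanSpace ℝ (Fin d) → EuclideanSpace ℝ (Fin d))
    (x : EuclideanSpace ℝ (Fin d)) : EuclideanSpace ℝ (Fin d) :=
  if ‖s x‖ ≤ R then s x else 0

/-- Total-variation distance between two densities on `ℝ^d`. -/
def tvDist (d : ℕ) (p q : EuclideanSpace ℝ (Fin d) → ℝ) : ℝ :=
  (1 / 2) * ∫ x, |p x - q x|

/-- Density of the one-step (DDPM-type) reverse Gaussian transition with rate `a`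
and drift field `s`, from `y` to `x`. -/
def ddpmKernel (d : ℕ) (a : ℝ) (s : EuclideanSpace ℝ (Fin d) → EuclideanSpace ℝ (Fin d))
    (y x : EuclideanSpace ℝ (Fin d)) : ℝ :=
  gaussV d (1 - a) ((Real.sqrt a)⁻¹ • (y + (1 - a) • s y)) x

/-- Density of `Y_{T-n}` for the DDPM sampler run with rates `α` and score estimates `s`. -/
def ddpmDensity (d T : ℕ) (α : ℕ → ℝ)
    (s : ℕ → EuclideanSpace ℝ (Fin d) → EuclideanSpace ℝ (Fin d)) :
    ℕ → EuclideanSpace ℝ (Fin d) → ℝ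
  | 0 => gaussV d 1 0
  | n + 1 => fun x =>
      ∫ y, ddpmKernel d (α (T - n)) (s (T - n)) y x * ddpmDensity d T α s n y

/-- Density (on `ℝ^d`) of `Ȳ_{T-n}^-` for the auxiliary reverse process. -/
def pbarMinus (d K T : ℕ) (w : Fin K → ℝ) (μ : Fin K → EuclideanSpace ℝ (Fin d))
    (αbar α : ℕ → ℝ) (C₁ C₂ : ℝ) : ℕ → EuclideanSpace ℝ (Fin d) → ℝ
  | 0 => (Eset d K T w μ (αbar T) (α T) C₁ C₂).indicator (gaussV d 1 0)
  | n + 1 =>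
      (Eset d K T w μ (αbar (T - n)) (α (T - n)) C₁ C₂).indicator fun x =>
        ∫ y in Eset d K T w μ (αbar (T - n)) (α (T - n)) C₁ C₂,
          ddpmKernel d (α (T - n)) (gmmScore d K w μ (αbar (T - n))) y x *
            min (mixDensity d K w μ (αbar (T - n)) y)
              (pbarMinus d K T w μ αbar α C₁ C₂ n y)

/-- The function `Δ_t(x) = p_{X_t^GMM}(x) - p_{Ȳ_t}(x)`. -/
def DeltaFn (d K T : ℕ) (w : Fin K → ℝ) (μ : Fin K → EuclideanSpace ℝ (Fin d))
    (αbar α : ℕ → ℝ) (C₁ C₂ : ℝ) (t : ℕ) (x : EuclideanSpace ℝ (Fin d)) : ℝ :=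
  mixDensity d K w μ (αbar t) x -
    min (mixDensity d K w μ (αbar t) x) (pbarMinus d K T w μ αbar α C₁ C₂ (T - t) x)

end


noncomputable section AuxStmt18
variable {d : ℕ} {v : ℝ} {m m1 m2 : EuclideanSpace ℝ (Fin d)}

lemma gaussV_nonneg (hv : 0 ≤ v) (x : EuclideanSpace ℝ (Fin d)) : 0 ≤ gaussV d v m x := by
  unfold gaussV
  have h2 : (0:ℝ) ≤ 2 * Real.pi * v := by positivity
  exact mul_nonneg (Real.rpow_nonneg h2 _) (Real.exp_nonneg _)

lemma continuous_gaussV : Continuous (gaussV d v m) := by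
  unfold gaussV; fun_prop

lemma integrable_rexp_neg_mul_sq_norm {b : ℝ} (hb : 0 < b) :
    Integrable (fun x : EuclideanSpace ℝ (Fin d) => Real.exp (-b * ‖x‖ ^ 2)) := by
  have h := GaussianFourier.integrable_cexp_neg_mul_sq_norm_add
    (b := (b : ℂ)) (by simpa using hb) 0 (0 : EuclideanSpace ℝ (Fin d))
  simp only [Complex.ofReal_zero, zero_mul, add_zero] at h
  have := h.norm
  refine this.congr (Filter.Eventually.of_forall fun x => ?_)
  simp [Complex.norm_exp, neg_mul, ← Complex.ofReal_pow]

lemma integrable_gaussV (hv : 0 < v) : Integrable (gaussV d v m) := by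
  unfold gaussV
  apply Integrable.const_mul
  have h : Integrable (fun x : EuclideanSpace ℝ (Fin d) =>
      Real.exp (-(2 * v)⁻¹ * ‖x‖ ^ 2)) := integrable_rexp_neg_mul_sq_norm (by positivity)
  have := h.comp_sub_right m
  refine this.congr (Filter.Eventually.of_forall fun x => ?_)
  simp only [neg_mul, neg_div]
  rw [div_eq_inv_mul]

lemma integral_gaussV (hv : 0 < v) : ∫ x, gaussV d v m x = 1 := by
  unfold gaussV
  rw [MeasureTheory.integral_const_mul]
  have h1 : ∀ x : EuclideanSpace ℝ (Fin d),
      Real.exp (-‖x - m‖ ^ 2 / (2 * v)) = Real.exp (-(2*v)⁻¹ * ‖x - m‖ ^ 2) := by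
    intro x; rw [neg_mul, neg_div, div_eq_inv_mul]
  simp_rw [h1]
  rw [integral_sub_right_eq_self (fun x : EuclideanSpace ℝ (Fin d) =>
      Real.exp (-(2*v)⁻¹ * ‖x‖ ^ 2)) m]
  rw [GaussianFourier.integral_rexp_neg_mul_sq_norm (by positivity)]
  rw [finrank_euclideanSpace_fin]
  have h2v : (0:ℝ) < 2 * Real.pi * v := by positivity
  rw [show Real.pi / (2*v)⁻¹ = 2 * Real.pi * v by field_simp]
  rw [← Real.rpow_add h2v, show (-(d:ℝ)/2 + d/2) = 0 by ring, Real.rpow_zero]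

lemma gaussV_mul_gaussV (m1 m2 x : EuclideanSpace ℝ (Fin d)) :
    gaussV d 1 m1 x * gaussV d 1 m2 x =
      (Real.exp (-‖m1 - m2‖ ^ 2 / 8) * gaussV d 1 ((2:ℝ)⁻¹ • (m1 + m2)) x) ^ 2 := by
  have hAB : ‖x - m1‖^2 + ‖x - m2‖^2
      = 2*‖x - (2:ℝ)⁻¹ • (m1 + m2)‖^2 + ‖m1 - m2‖^2/2 := by
    have par := parallelogram_law_with_norm ℝ (x - m1) (x - m2)
    have h1 : x - m1 + (x - m2) = (2:ℝ) • (x - (2:ℝ)⁻¹ • (m1 + m2)) := by module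
    have h2 : x - m1 - (x - m2) = m2 - m1 := by abel
    rw [h1, h2, norm_smul, norm_sub_rev m2 m1] at par
    simp only [Real.norm_ofNat, mul_pow] at par
    nlinarith [par]
  unfold gaussV
  simp only [mul_one]
  set c : ℝ := (2 * Real.pi) ^ (-(d : ℝ) / 2) with hc
  calc c * Real.exp (-‖x - m1‖^2/2) * (c * Real.exp (-‖x - m2‖^2/2))
      = c^2 * Real.exp (-‖x - m1‖^2/2 + -‖x - m2‖^2/2) := by rw [Real.exp_add]; ring
    _ = c^2 * Real.exp ((-‖m1-m2‖^2/8 + -‖x - (2:ℝ)⁻¹ • (m1+m2)‖^2/2)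
          + (-‖m1-m2‖^2/8 + -‖x - (2:ℝ)⁻¹ • (m1+m2)‖^2/2)) := by
        rw [mul_eq_mul_left_iff]
        left
        rw [Real.exp_eq_exp]
        linarith [hAB]
    _ = (Real.exp (-‖m1-m2‖^2/8) * (c * Real.exp (-‖x - (2:ℝ)⁻¹ • (m1+m2)‖^2/2)))^2 := by
        rw [Real.exp_add, Real.exp_add]; ring

lemma l1_gauss (m1 m2 : EuclideanSpace ℝ (Fin d)) :
    ∫ x, |gaussV d 1 m1 x - gaussV d 1 m2 x| ≤ ‖m1 - m2‖ := by
  set p : EuclideanSpace ℝ (Fin d) → ℝ := gaussV d 1 m1 with hp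
  set q : EuclideanSpace ℝ (Fin d) → ℝ := gaussV d 1 m2 with hq
  set ρ : ℝ := Real.exp (-‖m1 - m2‖ ^ 2 / 8) with hρ
  have hρ0 : 0 < ρ := Real.exp_pos _
  have hρ1 : ρ ≤ 1 := Real.exp_le_one_iff.2 (by nlinarith [sq_nonneg ‖m1 - m2‖])
  have hpn : ∀ x, 0 ≤ p x := fun x => gaussV_nonneg zero_le_one x
  have hqn : ∀ x, 0 ≤ q x := fun x => gaussV_nonneg zero_le_one x
  have hsq : ∀ x, Real.sqrt (p x * q x) = ρ * gaussV d 1 ((2:ℝ)⁻¹ • (m1 + m2)) x := by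
    intro x
    rw [gaussV_mul_gaussV m1 m2 x, Real.sqrt_sq
      (mul_nonneg (Real.exp_nonneg _) (gaussV_nonneg zero_le_one x))]
  have hip : Integrable p := integrable_gaussV one_pos
  have hiq : Integrable q := integrable_gaussV one_pos
  have hipq : Integrable (fun x => Real.sqrt (p x * q x)) := by
    simp_rw [hsq]; exact (integrable_gaussV one_pos).const_mul ρ
  have hIp : ∫ x, p x = 1 := integral_gaussV one_pos
  have hIq : ∫ x, q x = 1 := integral_gaussV one_pos
  have hIpq : ∫ x, Real.sqrt (p x * q x) = ρ := by
    simp_rw [hsq]; rw [integral_const_mul, integral_gaussV one_pos, mul_one]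
  set f : EuclideanSpace ℝ (Fin d) → ℝ := fun x => Real.sqrt (p x) - Real.sqrt (q x) with hf
  set g : EuclideanSpace ℝ (Fin d) → ℝ := fun x => Real.sqrt (p x) + Real.sqrt (q x) with hg
  have hgn : ∀ x, 0 ≤ g x := fun x => add_nonneg (Real.sqrt_nonneg _) (Real.sqrt_nonneg _)
  have hsqrt_mul : ∀ x, Real.sqrt (p x) * Real.sqrt (q x) = Real.sqrt (p x * q x) :=
    fun x => (Real.sqrt_mul (hpn x) _).symm
  have hf2 : ∀ x, f x ^ 2 = p x + q x - 2 * Real.sqrt (p x * q x) := by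
    intro x
    have h1 := Real.sq_sqrt (hpn x)
    have h2 := Real.sq_sqrt (hqn x)
    have : f x ^ 2 = Real.sqrt (p x) ^ 2 + Real.sqrt (q x) ^ 2
        - 2 * (Real.sqrt (p x) * Real.sqrt (q x)) := by ring
    rw [this, h1, h2, hsqrt_mul]
  have hg2 : ∀ x, g x ^ 2 = p x + q x + 2 * Real.sqrt (p x * q x) := by
    intro x
    have h1 := Real.sq_sqrt (hpn x)
    have h2 := Real.sq_sqrt (hqn x)
    have : g x ^ 2 = Real.sqrt (p x) ^ 2 + Real.sqrt (q x) ^ 2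
        + 2 * (Real.sqrt (p x) * Real.sqrt (q x)) := by ring
    rw [this, h1, h2, hsqrt_mul]
  have hadd : Integrable (fun x => p x + q x) := by exact hip.add hiq
  have hcm : Integrable (fun x => 2 * Real.sqrt (p x * q x)) := by exact hipq.const_mul 2
  have hif2 : Integrable (fun x => f x ^ 2) := by
    refine ((hadd.sub hcm).congr
      (Filter.Eventually.of_forall fun x => ?_))
    simp [hf2 x]
  have hig2 : Integrable (fun x => g x ^ 2) := by
    refine ((hadd.add hcm).congr
      (Filter.Eventually.of_forall fun x => ?_))
    simp [hg2 x]
  have hcontf : Continuous f := (continuous_gaussV.sqrt).sub (continuous_gaussV.sqrt)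
  have hcontg : Continuous g := (continuous_gaussV.sqrt).add (continuous_gaussV.sqrt)
  have hmeasg : AEStronglyMeasurable g volume := hcontg.aestronglyMeasurable
  have hmf : MemLp (fun x => |f x|) 2 volume :=
    (memLp_two_iff_integrable_sq hcontf.abs.aestronglyMeasurable).2 (by simpa [sq_abs] using hif2)
  have hmg : MemLp g 2 volume := (memLp_two_iff_integrable_sq hmeasg).2 hig2
  have hconj : Real.HolderConjugate 2 2 := by constructor <;> norm_num
  have holder := integral_mul_le_Lp_mul_Lq_of_nonneg (μ := volume) hconj
      (Filter.Eventually.of_forall fun x => abs_nonneg (f x))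
      (Filter.Eventually.of_forall hgn)
      (by rw [show ENNReal.ofReal (2:ℝ) = 2 by norm_num]; exact hmf)
      (by rw [show ENNReal.ofReal (2:ℝ) = 2 by norm_num]; exact hmg)
  have habs : ∀ x, |p x - q x| = |f x| * g x := by
    intro x
    have h1 := Real.sq_sqrt (hpn x)
    have h2 := Real.sq_sqrt (hqn x)
    have hd : p x - q x = f x * g x := by
      have : f x * g x = Real.sqrt (p x) ^ 2 - Real.sqrt (q x) ^ 2 := by ring
      rw [this, h1, h2]
    rw [hd, abs_mul, abs_of_nonneg (hgn x)]
  have hIf2 : ∫ x, f x ^ 2 = 2 - 2 * ρ := by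
    have : ∫ x, f x ^ 2 = ∫ x, (p x + q x - 2 * Real.sqrt (p x * q x)) :=
      integral_congr_ae (Filter.Eventually.of_forall fun x => hf2 x)
    rw [this, integral_sub hadd hcm, integral_add hip hiq,
      integral_const_mul, hIp, hIq, hIpq]
    ring
  have hIg2 : ∫ x, g x ^ 2 = 2 + 2 * ρ := by
    have : ∫ x, g x ^ 2 = ∫ x, (p x + q x + 2 * Real.sqrt (p x * q x)) :=
      integral_congr_ae (Filter.Eventually.of_forall fun x => hg2 x)
    rw [this, integral_add hadd hcm, integral_add hip hiq,
      integral_const_mul, hIp, hIq, hIpq]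
    ring
  calc ∫ x, |p x - q x| = ∫ x, |f x| * g x :=
        integral_congr_ae (Filter.Eventually.of_forall fun x => habs x)
    _ ≤ (∫ x, |f x| ^ (2:ℝ)) ^ (1/(2:ℝ)) * (∫ x, g x ^ (2:ℝ)) ^ (1/(2:ℝ)) := holder
    _ = Real.sqrt (2 - 2*ρ) * Real.sqrt (2 + 2*ρ) := by
        have e1 : ∀ y : ℝ, y ^ (2:ℝ) = y ^ (2:ℕ) := fun y => by
          rw [show (2:ℝ) = ((2:ℕ):ℝ) by norm_num, Real.rpow_natCast]
        simp_rw [e1, sq_abs]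
        rw [hIf2, hIg2, ← Real.sqrt_eq_rpow, ← Real.sqrt_eq_rpow]
    _ = Real.sqrt ((2 - 2*ρ) * (2 + 2*ρ)) := (Real.sqrt_mul (by linarith) _).symm
    _ ≤ Real.sqrt (‖m1 - m2‖ ^ 2) := by
        apply Real.sqrt_le_sqrt
        have hρsq : ρ * ρ = Real.exp (-‖m1 - m2‖ ^ 2 / 4) := by
          rw [hρ, ← Real.exp_add]; congr 1; ring
        have hexp := Real.add_one_le_exp (-‖m1 - m2‖ ^ 2 / 4)
        nlinarith [hρsq, hexp]
    _ = ‖m1 - m2‖ := Real.sqrt_sq (norm_nonneg _)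

end AuxStmt18


/-- For any `α ∈ (0,1)`, the total variation distance between the Gaussian
mixture `∑_k π_k N(μ_k, I_d)` and its diffused version `∑_k π_k N(√α μ_k, I_d)` satisfies
`TV ≤ (1/√2) (1 − α) ∑_k π_k ‖μ_k‖₂`. -/
theorem stmt18 (d K : ℕ) (hd : 1 ≤ d) (hK : 1 ≤ K)
    (w : Fin K → ℝ) (μ : Fin K → EuclideanSpace ℝ (Fin d))
    (hw : ∀ k, w k ∈ Set.Ioo (0 : ℝ) 1) (hsum : ∑ k, w k = 1)
    (a : ℝ) (ha : a ∈ Set.Ioo (0 : ℝ) 1) :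
    tvDist d (mixDensity d K w μ 1) (mixDensity d K w μ a) ≤
      (1 / Real.sqrt 2) * (1 - a) * ∑ k, w k * ‖μ k‖ := by
  obtain ⟨ha0, ha1⟩ := ha
  set h : Fin K → EuclideanSpace ℝ (Fin d) → ℝ :=
    fun k x => w k * (gaussV d 1 (μ k) x - gaussV d 1 (Real.sqrt a • μ k) x) with hh
  have hPQ : ∀ x, mixDensity d K w μ 1 x - mixDensity d K w μ a x = ∑ k, h k x := by
    intro x
    unfold mixDensity
    rw [← Finset.sum_sub_distrib]
    refine Finset.sum_congr rfl fun k _ => ?_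
    simp only [Real.sqrt_one, one_smul, hh, mul_sub]
  have hint_h : ∀ k : Fin K, Integrable (fun x => |h k x|) := fun k =>
    (((integrable_gaussV one_pos).sub (integrable_gaussV one_pos)).const_mul (w k)).abs
  have hint_sum : Integrable (fun x => ∑ k, |h k x|) :=
    integrable_finset_sum _ fun k _ => hint_h k
  have hint_lhs : Integrable (fun x => |mixDensity d K w μ 1 x - mixDensity d K w μ a x|) := by
    have : Integrable (fun x => ∑ k, h k x) := integrable_finset_sum _ fun k _ =>
      ((integrable_gaussV one_pos).sub (integrable_gaussV one_pos)).const_mul (w k)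
    refine this.abs.congr (Filter.Eventually.of_forall fun x => ?_)
    simp only [hPQ x]
  have step1 : ∫ x, |mixDensity d K w μ 1 x - mixDensity d K w μ a x|
      ≤ ∑ k, ∫ x, |h k x| := by
    rw [← integral_finset_sum _ (fun k _ => hint_h k)]
    refine integral_mono hint_lhs hint_sum fun x => ?_
    rw [hPQ x]
    exact Finset.abs_sum_le_sum_abs _ _
  have hsa1 : Real.sqrt a ≤ 1 := Real.sqrt_le_one.mpr ha1.le
  have step2 : ∀ k : Fin K, ∫ x, |h k x| ≤ w k * ((1 - Real.sqrt a) * ‖μ k‖) := by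
    intro k
    have hwk := (hw k).1
    have : ∀ x, |h k x| = w k * |gaussV d 1 (μ k) x - gaussV d 1 (Real.sqrt a • μ k) x| := by
      intro x; rw [hh, abs_mul, abs_of_pos hwk]
    calc ∫ x, |h k x|
        = w k * ∫ x, |gaussV d 1 (μ k) x - gaussV d 1 (Real.sqrt a • μ k) x| := by
          simp_rw [this]; rw [integral_const_mul]
      _ ≤ w k * ‖μ k - Real.sqrt a • μ k‖ :=
          mul_le_mul_of_nonneg_left (l1_gauss _ _) hwk.le
      _ = w k * ((1 - Real.sqrt a) * ‖μ k‖) := by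
          rw [show μ k - Real.sqrt a • μ k = (1 - Real.sqrt a) • μ k by module,
            norm_smul, Real.norm_eq_abs, abs_of_nonneg (by linarith)]
  have hS : (0:ℝ) ≤ ∑ k, w k * ‖μ k‖ :=
    Finset.sum_nonneg fun k _ => mul_nonneg (hw k).1.le (norm_nonneg _)
  have step3 : ∑ k, ∫ x, |h k x| ≤ (1 - Real.sqrt a) * ∑ k, w k * ‖μ k‖ := by
    rw [Finset.mul_sum]
    refine Finset.sum_le_sum fun k _ => (step2 k).trans_eq (by ring)
  have hasa : a ≤ Real.sqrt a := by
    nlinarith [Real.sq_sqrt ha0.le, Real.sqrt_nonneg a, hsa1]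
  have hs2 : Real.sqrt 2 ≤ 2 := by
    nlinarith [Real.sq_sqrt (by norm_num : (0:ℝ) ≤ 2), Real.sqrt_nonneg 2]
  have hs2pos : 0 < Real.sqrt 2 := Real.sqrt_pos.2 (by norm_num)
  have hhalf : (1:ℝ)/2 ≤ 1 / Real.sqrt 2 := by
    rw [div_le_div_iff₀ (by norm_num) hs2pos]; linarith
  unfold tvDist
  have key : ∫ x, |mixDensity d K w μ 1 x - mixDensity d K w μ a x|
      ≤ (1 - Real.sqrt a) * ∑ k, w k * ‖μ k‖ := step1.trans step3
  have h1 : (1 - Real.sqrt a) * ∑ k, w k * ‖μ k‖ ≤ (1 - a) * ∑ k, w k * ‖μ k‖ :=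
    mul_le_mul_of_nonneg_right (by linarith) hS
  have h2 : (0:ℝ) ≤ (1 - a) * ∑ k, w k * ‖μ k‖ := mul_nonneg (by linarith) hS
  calc (1/2) * ∫ x, |mixDensity d K w μ 1 x - mixDensity d K w μ a x|
      ≤ (1/2) * ((1 - a) * ∑ k, w k * ‖μ k‖) := by
        apply mul_le_mul_of_nonneg_left (key.trans h1) (by norm_num)
    _ ≤ (1 / Real.sqrt 2) * (1 - a) * ∑ k, w k * ‖μ k‖ := by
        rw [mul_assoc]
        exact mul_le_mul_of_nonneg_right hhalf h2
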